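/- Fix a prime p > 3 and a positive integer n ≥ 2, and write the base-p expansion of n as n = Σ_{i=1}^{k} a_i p^{b_i}, where 0 < a_i ≤ p-1 for each i and 0 ≤ b_1 < b_2 < ... < b_k. Suppose in addition that a_i = 1 for all i. Then Π_{i=1}^{k} p^{b_i} ≤ (1/2) · ((p-1)!)^((n-1)/(p-2)), where the right-hand side is a real number with real exponent (n-1)/(p-2). -/

import Mathlib

lemma aux_lin_le_pow (p : ℕ) (hp : 1 ≤ p) : ∀ m : ℕ, (p - 1) * m + 1 ≤ p ^ m := by
  obtain ⟨q, rfl⟩ : ∃ q, p = q + 1 := ⟨p - 1, by omega⟩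
  intro m
  induction m with
  | zero => simp
  | succ m ih =>
    have h1 : 1 ≤ (q + 1) ^ m := Nat.one_le_pow _ _ (by omega)
    have h2 : (q + 1) ^ (m + 1) = (q + 1) ^ m * (q + 1) := pow_succ _ m
    simp only [Nat.add_sub_cancel] at *
    nlinarith [ih, h1]

/-- Lemma 6.1 (second part): fix a prime `p > 3` and `n ≥ 2` with base-`p` expansion
`n = Σ_{i<k} a i * p ^ b i` in which every nonzero digit `a i` equals `1`.  Then
`Π_{i<k} p ^ (b i) ≤ (1/2) * ((p-1)!) ^ ((n-1)/(p-2))`, a real power. -/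
theorem base_p_centralizer_bound_all_digits_one
    (p n k : ℕ) (a b : ℕ → ℕ) (hp : p.Prime) (hp3 : 3 < p) (hn : 2 ≤ n)
    (ha : ∀ i < k, 0 < a i ∧ a i ≤ p - 1)
    (hb : ∀ i j, i < j → j < k → b i < b j)
    (hsum : n = ∑ i ∈ Finset.range k, a i * p ^ b i)
    (hone : ∀ i < k, a i = 1) :
    ((∏ i ∈ Finset.range k, p ^ b i : ℕ) : ℝ) ≤
      (1 / 2) * ((Nat.factorial (p - 1) : ℝ)) ^ (((n : ℝ) - 1) / ((p : ℝ) - 2)) := by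
  have hp5 : 5 ≤ p := by
    have h4 : p ≠ 4 := by intro h; rw [h] at hp; norm_num at hp
    omega
  set F := Nat.factorial (p - 1) with hF
  set S := ∑ i ∈ Finset.range k, b i with hS
  have hsum' : n = ∑ i ∈ Finset.range k, p ^ b i := by
    rw [hsum]
    refine Finset.sum_congr rfl fun i hi => ?_
    rw [hone i (Finset.mem_range.mp hi), one_mul]
  have hprod : (∏ i ∈ Finset.range k, p ^ b i) = p ^ S := by
    rw [hS, Finset.prod_pow_eq_pow_sum]
  have hk : 0 < k := by
    by_contra h
    have : k = 0 := by omega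
    simp [this] at hsum'
    omega
  -- S ≥ 1
  have hS1 : 1 ≤ S := by
    by_contra h
    have hS0 : S = 0 := by omega
    have hb0 : ∀ i ∈ Finset.range k, b i = 0 :=
      (Finset.sum_eq_zero_iff).mp (by rw [← hS]; exact hS0)
    rcases Nat.lt_or_ge k 2 with hk2 | hk2
    · have hk1 : k = 1 := by omega
      have : b 0 = 0 := hb0 0 (by simp [hk1])
      rw [hk1] at hsum'
      simp [this] at hsum'
      omega
    · have h01 : b 0 < b 1 := hb 0 1 (by omega) (by omega)
      have e0 : b 0 = 0 := hb0 0 (Finset.mem_range.mpr (by omega))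
      have e1 : b 1 = 0 := hb0 1 (Finset.mem_range.mpr (by omega))
      omega
  -- n - 1 ≥ (p-1)*S
  have hn1 : (p - 1) * S + 1 ≤ n := by
    have hle : ∑ i ∈ Finset.range k, ((p - 1) * b i + 1) ≤ ∑ i ∈ Finset.range k, p ^ b i :=
      Finset.sum_le_sum fun i _ => aux_lin_le_pow p (by omega) (b i)
    have heq : ∑ i ∈ Finset.range k, ((p - 1) * b i + 1) = (p - 1) * S + k := by
      rw [Finset.sum_add_distrib, ← Finset.mul_sum, Finset.sum_const, Finset.card_range,
        smul_eq_mul, mul_one, hS]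
    rw [heq] at hle
    omega
  -- F ≥ 2p
  have hF2p : 2 * p ≤ F := by
    obtain ⟨q, rfl⟩ : ∃ q, p = q + 5 := ⟨p - 5, by omega⟩
    have h1 : q + 5 - 1 = (q + 3) + 1 := by omega
    have h2 : F = (q + 4) * Nat.factorial (q + 3) := by rw [hF, h1, Nat.factorial_succ]
    have h3 : q + 3 ≤ Nat.factorial (q + 3) := Nat.self_le_factorial _
    nlinarith
  have hF1 : 1 ≤ F := by omega
  -- key natural inequality
  have key : (2 * p ^ S) ^ (p - 2) ≤ F ^ (n - 1) := by
    have e1 : (2 * p ^ S) ^ (p - 2) ≤ (2 * p) ^ ((p - 1) * S) := by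
      have l1 : (2 * p ^ S) ^ (p - 2) = 2 ^ (p - 2) * p ^ (S * (p - 2)) := by
        rw [mul_pow, ← pow_mul]
      have l2 : (2 * p) ^ ((p - 1) * S) = 2 ^ ((p - 1) * S) * p ^ ((p - 1) * S) :=
        mul_pow _ _ _
      rw [l1, l2]
      have ex1 : p - 2 ≤ (p - 1) * S := by
        have := Nat.mul_le_mul_left (p - 1) hS1
        omega
      have ex2 : S * (p - 2) ≤ (p - 1) * S := by
        rw [mul_comm]
        exact Nat.mul_le_mul_right S (by omega)
      exact Nat.mul_le_mul (Nat.pow_le_pow_right (by omega) ex1)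
        (Nat.pow_le_pow_right (by omega) ex2)
    have e2 : (2 * p) ^ ((p - 1) * S) ≤ F ^ ((p - 1) * S) :=
      Nat.pow_le_pow_left hF2p _
    have e3 : F ^ ((p - 1) * S) ≤ F ^ (n - 1) :=
      Nat.pow_le_pow_right hF1 (by omega)
    omega
  -- move to ℝ
  rw [hprod]
  set d : ℕ := p - 2 with hd
  set m : ℕ := n - 1 with hm
  have hd0 : 0 < d := by omega
  have hdR : (0 : ℝ) < (d : ℝ) := by exact_mod_cast hd0
  have hmR : ((m : ℕ) : ℝ) = (n : ℝ) - 1 := by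
    rw [hm, Nat.cast_sub (by omega : 1 ≤ n)]; norm_num
  have hdR' : ((d : ℕ) : ℝ) = (p : ℝ) - 2 := by
    rw [hd, Nat.cast_sub (by omega : 2 ≤ p)]; norm_num
  have keyR : ((2 : ℝ) * (p : ℝ) ^ S) ^ d ≤ (F : ℝ) ^ m := by exact_mod_cast key
  have hbase : (0 : ℝ) ≤ 2 * (p : ℝ) ^ S := by positivity
  have h2 : (((2 : ℝ) * (p : ℝ) ^ S) ^ d) ^ ((d : ℝ)⁻¹) ≤ ((F : ℝ) ^ m) ^ ((d : ℝ)⁻¹) :=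
    Real.rpow_le_rpow (by positivity) keyR (by positivity)
  have lhs_eq : (((2 : ℝ) * (p : ℝ) ^ S) ^ d) ^ ((d : ℝ)⁻¹) = 2 * (p : ℝ) ^ S := by
    rw [← Real.rpow_natCast (2 * (p : ℝ) ^ S) d, ← Real.rpow_mul hbase,
      mul_inv_cancel₀ (ne_of_gt hdR), Real.rpow_one]
  have rhs_eq : ((F : ℝ) ^ m) ^ ((d : ℝ)⁻¹) = (F : ℝ) ^ ((m : ℝ) / (d : ℝ)) := by
    rw [← Real.rpow_natCast (F : ℝ) m, ← Real.rpow_mul (by positivity), div_eq_mul_inv]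
  rw [lhs_eq, rhs_eq] at h2
  rw [← hmR, ← hdR']
  push_cast
  linarith
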